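/- arXiv:2204.00518 — 2 statements merged into one kernel-verified Lean document; each statement's English description precedes it below -/
import Mathlib

section
/- Let 0 < p₀ ≤ ∞ and 0 < p₁,…,pₙ ≤ ∞ with n/p₀ ≤ Σ_{i=1}^n 1/pᵢ. For any cube Q in ℝⁿ, the mixed Morrey norm of the indicator satisfies ‖χ_Q‖_{M^{p₀}_{p⃗}(ℝⁿ)} = |Q|^{1/p₀}. -/
open MeasureTheory ENNReal Filter Topology

/-- Iterated mixed-norm: innermost integration in the first coordinate. -/
noncomputable def mixedNorm : (n : ℕ) → (Fin n → ℝ) → ((Fin n → ℝ) → ℝ≥0∞) → ℝ≥0∞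
  | 0, _, f => f (fun i => i.elim0)
  | (n+1), p, f =>
      (∫⁻ t : ℝ, (mixedNorm n (fun i => p i.castSucc) (fun x => f (Fin.snoc x t)))
          ^ (p (Fin.last n))) ^ (1 / p (Fin.last n))

/-- Mixed-norm Lebesgue norm of a real valued function. -/
noncomputable def mixedLpNorm (n : ℕ) (p : Fin n → ℝ) (f : (Fin n → ℝ) → ℝ) : ℝ≥0∞ :=
  mixedNorm n p (fun x => ENNReal.ofReal |f x|)

/-- Open axis-parallel cube centered at `x` with side length `r`. -/
def cube (n : ℕ) (x : Fin n → ℝ) (r : ℝ) : Set (Fin n → ℝ) := Metric.ball x (r / 2)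

/-- Mixed Morrey norm. -/
noncomputable def morreyNorm (n : ℕ) (p₀ : ℝ) (p : Fin n → ℝ) (f : (Fin n → ℝ) → ℝ) : ℝ≥0∞ :=
  ⨆ (x : Fin n → ℝ) (r : ℝ) (_ : 0 < r),
    ENNReal.ofReal r ^ ((n : ℝ) / p₀ - ∑ i, 1 / p i)
      * mixedLpNorm n p (Set.indicator (cube n x r) f)

/-- Conjugate exponent. -/
noncomputable def conjExp (p : ℝ) : ℝ := p / (p - 1)

/-- A `(p₀', p⃗')`-block associated with the mixed Morrey space `M^{p₀}_{p⃗}`. -/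
def IsBlock (n : ℕ) (p₀ : ℝ) (p : Fin n → ℝ) (b : (Fin n → ℝ) → ℝ) : Prop :=
  ∃ (x : Fin n → ℝ) (r : ℝ), 0 < r ∧ (∀ y, y ∉ cube n x r → b y = 0) ∧
    mixedLpNorm n (fun i => conjExp (p i)) b
      ≤ ENNReal.ofReal r ^ ((n : ℝ) / p₀ - ∑ i, 1 / p i)

/-- Norm of the block space `B^{p₀'}_{p⃗'}` (`⊤` if no decomposition exists). -/
noncomputable def blockNorm (n : ℕ) (p₀ : ℝ) (p : Fin n → ℝ) (f : (Fin n → ℝ) → ℝ) : ℝ≥0∞ :=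
  ⨅ (c : ℕ → ℝ) (b : ℕ → (Fin n → ℝ) → ℝ) (_ : Summable fun i => |c i|)
    (_ : ∀ i, IsBlock n p₀ p (b i)) (_ : ∀ x, HasSum (fun i => c i * b i x) (f x)),
    ENNReal.ofReal (∑' i, |c i|)

/-- Hardy–Littlewood maximal function over cubes. -/
noncomputable def hlMax (n : ℕ) (f : (Fin n → ℝ) → ℝ) (x : Fin n → ℝ) : ℝ≥0∞ :=
  ⨆ (z : Fin n → ℝ) (r : ℝ) (_ : 0 < r) (_ : x ∈ cube n z r),
    ENNReal.ofReal r ^ (-(n : ℝ)) * ∫⁻ y in cube n z r, ENNReal.ofReal |f y|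

/-! ### Auxiliary lemmas -/

lemma mixedNorm_zero : ∀ (n : ℕ) (p : Fin n → ℝ), (∀ i, 0 < p i) →
    mixedNorm n p (fun _ => 0) = 0
  | 0, _, _ => rfl
  | (n+1), p, hp => by
    have h0 : (0:ℝ) < 1 / p (Fin.last n) := by
      have := hp (Fin.last n); positivity
    simp only [mixedNorm]
    rw [mixedNorm_zero n _ (fun i => hp _), ENNReal.zero_rpow_of_pos (hp (Fin.last n)),
      lintegral_zero, ENNReal.zero_rpow_of_pos h0]

lemma mixedNorm_indicator_pi : ∀ (n : ℕ) (p : Fin n → ℝ), (∀ i, 0 < p i) →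
    ∀ (a b : Fin n → ℝ),
    mixedNorm n p ((Set.univ.pi fun i => Set.Ioo (a i) (b i)).indicator fun _ => (1:ℝ≥0∞)) =
      ∏ i, ENNReal.ofReal (b i - a i) ^ (1 / p i)
  | 0, p, hp, a, b => by
    simp only [mixedNorm]
    rw [Set.indicator_of_mem (by simp : _ ∈ _)]
    simp
  | (n+1), p, hp, a, b => by
    have hlast := hp (Fin.last n)
    have IH := mixedNorm_indicator_pi n (fun i => p i.castSucc) (fun i => hp _)
        (fun i => a i.castSucc) (fun i => b i.castSucc)
    set C : ℝ≥0∞ := ∏ i : Fin n,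
        ENNReal.ofReal (b i.castSucc - a i.castSucc) ^ (1 / p i.castSucc) with hC
    have key : ∀ t : ℝ, (mixedNorm n (fun i => p i.castSucc)
        (fun x => ((Set.univ.pi fun i => Set.Ioo (a i) (b i)).indicator
          (fun _ => (1:ℝ≥0∞))) (Fin.snoc x t)))
        = (Set.Ioo (a (Fin.last n)) (b (Fin.last n))).indicator (fun _ => C) t := by
      intro t
      by_cases ht : t ∈ Set.Ioo (a (Fin.last n)) (b (Fin.last n))
      · rw [Set.indicator_of_mem ht, ← IH]
        congr 1
        funext y
        by_cases hy : y ∈ Set.univ.pi fun i : Fin n => Set.Ioo (a i.castSucc) (b i.castSucc)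
        · rw [Set.indicator_of_mem, Set.indicator_of_mem hy]
          rw [Set.mem_univ_pi]
          intro i
          induction i using Fin.lastCases with
          | last => simpa using ht
          | cast j => simpa using (Set.mem_univ_pi.mp hy) j
        · rw [Set.indicator_of_notMem, Set.indicator_of_notMem hy]
          intro hmem
          apply hy
          rw [Set.mem_univ_pi]
          intro i
          simpa using (Set.mem_univ_pi.mp hmem) i.castSucc
      · rw [Set.indicator_of_notMem ht]
        have hz : (fun y : Fin n → ℝ => ((Set.univ.pi fun i => Set.Ioo (a i) (b i)).indicator
            (fun _ => (1:ℝ≥0∞))) (Fin.snoc y t)) = fun _ => 0 := by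
          funext y
          apply Set.indicator_of_notMem
          intro hmem
          exact ht (by simpa using (Set.mem_univ_pi.mp hmem) (Fin.last n))
        rw [hz, mixedNorm_zero n _ (fun i => hp _)]
    simp only [mixedNorm]
    have hint : (∫⁻ t : ℝ, (mixedNorm n (fun i => p i.castSucc)
          fun y => ((Set.univ.pi fun i => Set.Ioo (a i) (b i)).indicator
            (fun _ => (1:ℝ≥0∞))) (Fin.snoc y t)) ^ (p (Fin.last n)))
        = C ^ p (Fin.last n) * ENNReal.ofReal (b (Fin.last n) - a (Fin.last n)) := by
      have hpt : ∀ t : ℝ, ((Set.Ioo (a (Fin.last n)) (b (Fin.last n))).indicator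
            (fun _ => C) t) ^ (p (Fin.last n))
          = (Set.Ioo (a (Fin.last n)) (b (Fin.last n))).indicator
            (fun _ => C ^ p (Fin.last n)) t := by
        intro t
        by_cases ht : t ∈ Set.Ioo (a (Fin.last n)) (b (Fin.last n)) <;>
          simp [ht, ENNReal.zero_rpow_of_pos hlast]
      simp_rw [key, hpt]
      rw [lintegral_indicator measurableSet_Ioo, setLIntegral_const, Real.volume_Ioo]
    rw [hint, ENNReal.mul_rpow_of_nonneg _ _ (one_div_nonneg.mpr hlast.le),
      ← ENNReal.rpow_mul, mul_one_div_cancel hlast.ne', ENNReal.rpow_one,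
      Fin.prod_univ_castSucc]

lemma mixedLpNorm_indicator_pi (n : ℕ) (p : Fin n → ℝ) (hp : ∀ i, 0 < p i) (a b : Fin n → ℝ) :
    mixedLpNorm n p (Set.indicator (Set.univ.pi fun i => Set.Ioo (a i) (b i))
        fun _ => (1:ℝ)) = ∏ i, ENNReal.ofReal (b i - a i) ^ (1 / p i) := by
  rw [mixedLpNorm, ← mixedNorm_indicator_pi n p hp a b]
  congr 1
  funext y
  by_cases hy : y ∈ Set.univ.pi fun i => Set.Ioo (a i) (b i) <;> simp [hy]

lemma cube_eq_pi (n : ℕ) (x : Fin n → ℝ) (r : ℝ) (hr : 0 < r) :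
    cube n x r = Set.univ.pi fun i => Set.Ioo (x i - r/2) (x i + r/2) := by
  ext y
  rw [cube, Metric.mem_ball, dist_pi_lt_iff (by linarith), Set.mem_univ_pi]
  refine forall_congr' fun i => ?_
  rw [Real.dist_eq, abs_sub_lt_iff, Set.mem_Ioo]
  constructor <;> rintro ⟨h1, h2⟩ <;> constructor <;> linarith

lemma rpow_sum_fin {n : ℕ} (x : ℝ≥0∞) (hx : x ≠ 0) (hx' : x ≠ ⊤) (f : Fin n → ℝ) :
    x ^ (∑ i, f i) = ∏ i, x ^ f i := by
  induction (Finset.univ : Finset (Fin n)) using Finset.cons_induction with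
  | empty => simp
  | cons i s hi ih => rw [Finset.sum_cons, Finset.prod_cons, ENNReal.rpow_add _ _ hx hx', ih]

lemma rpow_le_rpow_nonpos {x y : ℝ≥0∞} (hxy : x ≤ y) {z : ℝ} (hz : z ≤ 0) :
    y ^ z ≤ x ^ z := by
  obtain ⟨w, rfl⟩ : ∃ w, z = -w := ⟨-z, (neg_neg z).symm⟩
  rw [ENNReal.rpow_neg, ENNReal.rpow_neg]
  exact ENNReal.inv_le_inv.mpr (ENNReal.rpow_le_rpow hxy (by linarith))

/-- The mixed Morrey norm of the indicator of a cube `Q` is `|Q|^{1/p₀}`. -/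
theorem morrey_norm_indicator_cube (n : ℕ) (p₀ : ℝ) (p : Fin n → ℝ)
    (hp₀ : 0 < p₀) (hp : ∀ i, 0 < p i) (hcond : (n : ℝ) / p₀ ≤ ∑ i, 1 / p i)
    (x : Fin n → ℝ) (r : ℝ) (hr : 0 < r) :
    morreyNorm n p₀ p (Set.indicator (cube n x r) (fun _ => (1 : ℝ)))
      = ENNReal.ofReal r ^ ((n : ℝ) / p₀) := by
  have hSig : (0:ℝ) ≤ ∑ i, 1 / p i :=
    Finset.sum_nonneg fun i _ => one_div_nonneg.mpr (hp i).le
  have hnp : (0:ℝ) ≤ (n:ℝ)/p₀ := by positivity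
  have hE : (n:ℝ)/p₀ - ∑ i, 1/p i ≤ 0 := by linarith
  have hofr0 : ENNReal.ofReal r ≠ 0 := (ENNReal.ofReal_pos.mpr hr).ne'
  have hterm : ∀ (z : Fin n → ℝ) (s : ℝ), 0 < s →
      mixedLpNorm n p (Set.indicator (cube n z s)
          (Set.indicator (cube n x r) fun _ => (1:ℝ)))
        = ∏ i, ENNReal.ofReal
            (min (z i + s/2) (x i + r/2) - max (z i - s/2) (x i - r/2)) ^ (1/p i) := by
    intro z s hs
    rw [Set.indicator_indicator]
    have hset : cube n z s ∩ cube n x r = Set.univ.pi fun i =>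
        Set.Ioo (max (z i - s/2) (x i - r/2)) (min (z i + s/2) (x i + r/2)) := by
      rw [cube_eq_pi n z s hs, cube_eq_pi n x r hr, ← Set.pi_inter_distrib]
      simp_rw [Set.Ioo_inter_Ioo]
    rw [hset, mixedLpNorm_indicator_pi n p hp]
  rw [morreyNorm]
  apply le_antisymm
  · refine iSup_le fun z => iSup_le fun s => iSup_le fun hs => ?_
    rw [hterm z s hs]
    have hofs0 : ENNReal.ofReal s ≠ 0 := (ENNReal.ofReal_pos.mpr hs).ne'
    rcases le_total s r with hsr | hrs
    · have hprod : (∏ i, ENNReal.ofReal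
            (min (z i + s/2) (x i + r/2) - max (z i - s/2) (x i - r/2)) ^ (1/p i))
          ≤ ENNReal.ofReal s ^ (∑ i, 1/p i) := by
        rw [rpow_sum_fin _ hofs0 ENNReal.ofReal_ne_top]
        refine Finset.prod_le_prod' fun i _ => ENNReal.rpow_le_rpow
          (ENNReal.ofReal_le_ofReal ?_) (one_div_nonneg.mpr (hp i).le)
        have h1 := min_le_left (z i + s/2) (x i + r/2)
        have h2 := le_max_left (z i - s/2) (x i - r/2)
        linarith
      calc ENNReal.ofReal s ^ ((n:ℝ)/p₀ - ∑ i, 1/p i) * _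
          ≤ ENNReal.ofReal s ^ ((n:ℝ)/p₀ - ∑ i, 1/p i)
              * ENNReal.ofReal s ^ (∑ i, 1/p i) := mul_le_mul_right hprod _
        _ = ENNReal.ofReal s ^ ((n:ℝ)/p₀ - ∑ i, 1/p i + ∑ i, 1/p i) :=
            (ENNReal.rpow_add _ _ hofs0 ENNReal.ofReal_ne_top).symm
        _ = ENNReal.ofReal s ^ ((n:ℝ)/p₀) := by congr 1; ring
        _ ≤ ENNReal.ofReal r ^ ((n:ℝ)/p₀) :=
            ENNReal.rpow_le_rpow (ENNReal.ofReal_le_ofReal hsr) hnp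
    · have hprod : (∏ i, ENNReal.ofReal
            (min (z i + s/2) (x i + r/2) - max (z i - s/2) (x i - r/2)) ^ (1/p i))
          ≤ ENNReal.ofReal r ^ (∑ i, 1/p i) := by
        rw [rpow_sum_fin _ hofr0 ENNReal.ofReal_ne_top]
        refine Finset.prod_le_prod' fun i _ => ENNReal.rpow_le_rpow
          (ENNReal.ofReal_le_ofReal ?_) (one_div_nonneg.mpr (hp i).le)
        have h1 := min_le_right (z i + s/2) (x i + r/2)
        have h2 := le_max_right (z i - s/2) (x i - r/2)
        linarith
      have hbase : ENNReal.ofReal s ^ ((n:ℝ)/p₀ - ∑ i, 1/p i)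
          ≤ ENNReal.ofReal r ^ ((n:ℝ)/p₀ - ∑ i, 1/p i) :=
        rpow_le_rpow_nonpos (ENNReal.ofReal_le_ofReal hrs) hE
      calc ENNReal.ofReal s ^ ((n:ℝ)/p₀ - ∑ i, 1/p i) * _
          ≤ ENNReal.ofReal r ^ ((n:ℝ)/p₀ - ∑ i, 1/p i)
              * ENNReal.ofReal r ^ (∑ i, 1/p i) := mul_le_mul' hbase hprod
        _ = ENNReal.ofReal r ^ ((n:ℝ)/p₀ - ∑ i, 1/p i + ∑ i, 1/p i) :=
            (ENNReal.rpow_add _ _ hofr0 ENNReal.ofReal_ne_top).symm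
        _ = ENNReal.ofReal r ^ ((n:ℝ)/p₀) := by congr 1; ring
  · refine le_iSup_of_le x (le_iSup_of_le r (le_iSup_of_le hr (le_of_eq ?_)))
    rw [hterm x r hr]
    have hlen : ∀ i : Fin n,
        min (x i + r/2) (x i + r/2) - max (x i - r/2) (x i - r/2) = r := by
      intro i; rw [min_self, max_self]; ring
    simp_rw [hlen]
    rw [← rpow_sum_fin _ hofr0 ENNReal.ofReal_ne_top,
      ← ENNReal.rpow_add _ _ hofr0 ENNReal.ofReal_ne_top]
    congr 1; ring
end

section
/- If X is a ball Banach function space on which the Hardy–Littlewood maximal operator M is bounded, then for every cube Q, |Q| ∼ ‖χ_Q‖_X · ‖χ_Q‖_{X'}, with implicit constants independent of Q. -/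
open MeasureTheory ENNReal Filter Topology

/-- A ball Banach function space on `ℝⁿ`. -/
structure BallBanachFS (n : ℕ) where
  N : ((Fin n → ℝ) → ℝ) → ℝ≥0∞
  n_zero : N 0 = 0
  n_triangle : ∀ f g, N (f + g) ≤ N f + N g
  n_smul : ∀ (c : ℝ) (f), N (c • f) = ENNReal.ofReal |c| * N f
  n_mono : ∀ f g, (∀ᵐ x ∂(volume : Measure (Fin n → ℝ)), |g x| ≤ |f x|) → N g ≤ N f
  n_fatou : ∀ (f : ℕ → (Fin n → ℝ) → ℝ) (F : (Fin n → ℝ) → ℝ),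
    (∀ᵐ x ∂(volume : Measure (Fin n → ℝ)),
      (∀ m, 0 ≤ f m x) ∧ Monotone (fun m => f m x) ∧
        Tendsto (fun m => f m x) atTop (𝓝 (F x))) →
    Tendsto (fun m => N (f m)) atTop (𝓝 (N F))
  cube_mem : ∀ (x : Fin n → ℝ) (r : ℝ), 0 < r →
    N (Set.indicator (cube n x r) (fun _ => (1 : ℝ))) < ⊤
  cube_int : ∀ (x : Fin n → ℝ) (r : ℝ), 0 < r → ∃ C : ℝ≥0∞, C ≠ ⊤ ∧
    ∀ f : (Fin n → ℝ) → ℝ, (∀ y, 0 ≤ f y) →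
      ∫⁻ y in cube n x r, ENNReal.ofReal (f y) ≤ C * N f

/-- Köthe dual (associate) norm of a ball Banach function space. -/
noncomputable def kotheNorm {n : ℕ} (X : BallBanachFS n) (f : (Fin n → ℝ) → ℝ) : ℝ≥0∞ :=
  ⨆ (g : (Fin n → ℝ) → ℝ) (_ : X.N g ≤ 1), ∫⁻ x, ENNReal.ofReal |f x * g x|


open NNReal in
lemma rpow_cancel_aux (r : ℝ) (hr : 0 < r) (n : ℕ) :
    ENNReal.ofReal r ^ (-(n:ℝ)) * ENNReal.ofReal r ^ (n:ℝ) = 1 := by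
  rw [← ENNReal.rpow_add _ _ (ENNReal.ofReal_pos.mpr hr).ne' ENNReal.ofReal_ne_top,
    neg_add_cancel, ENNReal.rpow_zero]

lemma cube_volume (n : ℕ) (x : Fin n → ℝ) (r : ℝ) (hr : 0 < r) :
    volume (cube n x r) = ENNReal.ofReal r ^ (n : ℝ) := by
  have h2 : (0:ℝ) < r/2 := by linarith
  rw [cube, Real.volume_pi_ball x h2]
  have h3 : 2 * (r/2) = r := by ring
  rw [h3, Fintype.card_fin, ENNReal.ofReal_pow hr.le, ← ENNReal.rpow_natCast]

lemma hlMax_ge (n : ℕ) (f : (Fin n → ℝ) → ℝ) (z : Fin n → ℝ) (r : ℝ) (hr : 0 < r)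
    (x : Fin n → ℝ) (hx : x ∈ cube n z r) :
    ENNReal.ofReal r ^ (-(n:ℝ)) * ∫⁻ y in cube n z r, ENNReal.ofReal |f y|
      ≤ hlMax n f x := by
  unfold hlMax
  exact le_iSup_of_le z (le_iSup_of_le r (le_iSup_of_le hr (le_iSup_of_le hx le_rfl)))

lemma hlMax_le (n : ℕ) (f : (Fin n → ℝ) → ℝ) (k : NNReal) (hf : ∀ y, |f y| ≤ (k:ℝ))
    (x : Fin n → ℝ) : hlMax n f x ≤ (k : ℝ≥0∞) := by
  unfold hlMax
  refine iSup_le fun z => iSup_le fun r => iSup_le fun hr => iSup_le fun _ => ?_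
  have h1 : ∫⁻ y in cube n z r, ENNReal.ofReal |f y| ≤ (k:ℝ≥0∞) * volume (cube n z r) := by
    calc ∫⁻ y in cube n z r, ENNReal.ofReal |f y|
        ≤ ∫⁻ _ in cube n z r, (k:ℝ≥0∞) := by
          refine lintegral_mono fun y => ?_
          simpa using ENNReal.ofReal_le_ofReal (hf y)
      _ = (k:ℝ≥0∞) * volume (cube n z r) := setLIntegral_const _ _
  calc ENNReal.ofReal r ^ (-(n:ℝ)) * ∫⁻ y in cube n z r, ENNReal.ofReal |f y|
      ≤ ENNReal.ofReal r ^ (-(n:ℝ)) * ((k:ℝ≥0∞) * (ENNReal.ofReal r ^ (n:ℝ))) := by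
        rw [← cube_volume n z r hr]; exact mul_le_mul_right h1 _
    _ = (ENNReal.ofReal r ^ (-(n:ℝ)) * ENNReal.ofReal r ^ (n:ℝ)) * (k:ℝ≥0∞) := by ring
    _ = (k:ℝ≥0∞) := by rw [rpow_cancel_aux r hr n, one_mul]

/-- If the Hardy–Littlewood maximal operator is bounded on a ball Banach function
space `X`, then `|Q| ∼ ‖χ_Q‖_X ‖χ_Q‖_{X'}` uniformly over cubes. -/
theorem cube_measure_equiv_norm_mul_dual_norm (n : ℕ) (X : BallBanachFS n)
    (hM : ∃ C : ℝ≥0∞, C ≠ ⊤ ∧ ∀ f : (Fin n → ℝ) → ℝ,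
      X.N (fun x => (hlMax n f x).toReal) ≤ C * X.N f) :
    ∃ c C : ℝ≥0∞, 0 < c ∧ C ≠ ⊤ ∧
      ∀ (x : Fin n → ℝ) (r : ℝ), 0 < r →
        c * ENNReal.ofReal r ^ (n : ℝ)
            ≤ X.N (Set.indicator (cube n x r) (fun _ => (1 : ℝ)))
              * kotheNorm X (Set.indicator (cube n x r) (fun _ => (1 : ℝ))) ∧
          X.N (Set.indicator (cube n x r) (fun _ => (1 : ℝ)))
              * kotheNorm X (Set.indicator (cube n x r) (fun _ => (1 : ℝ)))
            ≤ C * ENNReal.ofReal r ^ (n : ℝ) := by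
  obtain ⟨C, hC, hCM⟩ := hM
  refine ⟨1, C, one_pos, hC, ?_⟩
  intro x r hr
  set Q := cube n x r with hQdef
  have hQm : MeasurableSet Q := measurableSet_ball
  set χ : (Fin n → ℝ) → ℝ := Set.indicator Q (fun _ => (1:ℝ)) with hχ
  have hvol : volume Q = ENNReal.ofReal r ^ (n:ℝ) := cube_volume n x r hr
  have hvolpos : 0 < volume Q := by
    rw [hvol]; exact ENNReal.rpow_pos (ENNReal.ofReal_pos.mpr hr) ENNReal.ofReal_ne_top
  have hfin : X.N χ < ⊤ := X.cube_mem x r hr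
  -- positivity of N χ
  have hpos : 0 < X.N χ := by
    obtain ⟨C₀, hC₀, hint⟩ := X.cube_int x r hr
    have h1 : ∫⁻ y in Q, ENNReal.ofReal (χ y) ≤ C₀ * X.N χ :=
      hint χ (Set.indicator_nonneg (fun _ _ => zero_le_one))
    have h2 : ∫⁻ y in Q, ENNReal.ofReal (χ y) = volume Q := by
      rw [setLIntegral_congr_fun (g := fun _ => (1:ℝ≥0∞)) hQm
        (fun y hy => by rw [hχ, Set.indicator_of_mem hy, ENNReal.ofReal_one])]
      exact setLIntegral_one Q
    rw [h2] at h1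
    by_contra h
    push_neg at h
    have : X.N χ = 0 := le_antisymm h zero_le
    rw [this, mul_zero] at h1
    exact absurd (le_antisymm h1 zero_le) hvolpos.ne'
  -- the integrand of the Köthe norm, as a set integral
  have hInteg : ∀ g : (Fin n → ℝ) → ℝ,
      (∫⁻ y, ENNReal.ofReal |χ y * g y|) = ∫⁻ y in Q, ENNReal.ofReal |g y| := by
    intro g
    rw [← lintegral_indicator hQm]
    congr 1
    funext y
    by_cases hy : y ∈ Q
    · simp [hχ, Set.indicator_of_mem hy]
    · simp [hχ, Set.indicator_of_notMem hy]
  constructor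
  · -- lower bound
    set t := (X.N χ).toReal with ht
    have htpos : 0 < t := ENNReal.toReal_pos hpos.ne' hfin.ne
    have hNt : X.N χ = ENNReal.ofReal t := (ENNReal.ofReal_toReal hfin.ne).symm
    set g : (Fin n → ℝ) → ℝ := t⁻¹ • χ with hg
    have hNg : X.N g ≤ 1 := by
      rw [hg, X.n_smul, abs_of_pos (inv_pos.mpr htpos), hNt,
        ← ENNReal.ofReal_mul (by positivity), inv_mul_cancel₀ htpos.ne',
        ENNReal.ofReal_one]
    have hI : (∫⁻ y, ENNReal.ofReal |χ y * g y|) = ENNReal.ofReal t⁻¹ * volume Q := by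
      rw [hInteg g]
      have : ∀ y ∈ Q, ENNReal.ofReal |g y| = ENNReal.ofReal t⁻¹ := by
        intro y hy
        simp [hg, hχ, Set.indicator_of_mem hy, abs_of_nonneg (inv_pos.mpr htpos).le]
      rw [setLIntegral_congr_fun hQm this, setLIntegral_const]
    have hk : ENNReal.ofReal t⁻¹ * volume Q ≤ kotheNorm X χ := by
      rw [← hI]
      exact le_iSup₂ (f := fun (g : (Fin n → ℝ) → ℝ) (_ : X.N g ≤ 1) =>
        ∫⁻ y, ENNReal.ofReal |χ y * g y|) g hNg
    calc 1 * ENNReal.ofReal r ^ (n:ℝ) = volume Q := by rw [one_mul, hvol]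
      _ = (ENNReal.ofReal t * ENNReal.ofReal t⁻¹) * volume Q := by
          rw [← ENNReal.ofReal_mul htpos.le, mul_inv_cancel₀ htpos.ne', ENNReal.ofReal_one,
            one_mul]
      _ = ENNReal.ofReal t * (ENNReal.ofReal t⁻¹ * volume Q) := by ring
      _ ≤ X.N χ * kotheNorm X χ := by rw [hNt]; exact mul_le_mul_right hk _
  · -- upper bound
    have key : ∀ g : (Fin n → ℝ) → ℝ, X.N g ≤ 1 →
        (∫⁻ y, ENNReal.ofReal |χ y * g y|) * X.N χ ≤ C * ENNReal.ofReal r ^ (n:ℝ) := by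
      intro g hNg
      rw [hInteg g, ← lintegral_indicator hQm,
        lintegral_eq_nnreal (Set.indicator Q fun y => ENNReal.ofReal |g y|) volume,
        ENNReal.iSup_mul]
      refine iSup_le fun φ => ?_
      rw [ENNReal.iSup_mul]
      refine iSup_le fun hφ => ?_
      -- the bounded function h
      set h : (Fin n → ℝ) → ℝ := fun y => ((φ y : NNReal) : ℝ) with hh
      obtain ⟨k, hk⟩ := φ.exists_forall_le
      have hh0 : ∀ y, 0 ≤ h y := fun y => (φ y).coe_nonneg
      have hhabs : ∀ y, |h y| = h y := fun y => abs_of_nonneg (hh0 y)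
      have hhg : ∀ y, |h y| ≤ |g y| := by
        intro y
        by_cases hy : y ∈ Q
        · have := hφ y
          rw [Set.indicator_of_mem hy, ← ENNReal.ofReal_coe_nnreal] at this
          rw [hhabs]
          exact (ENNReal.ofReal_le_ofReal_iff (abs_nonneg _)).mp this
        · have := hφ y
          rw [Set.indicator_of_notMem hy, nonpos_iff_eq_zero, ENNReal.coe_eq_zero] at this
          simp [hh, this]
      have hNh : X.N h ≤ 1 := le_trans (X.n_mono g h (Filter.Eventually.of_forall hhg)) hNg
      have hhk : ∀ y, |h y| ≤ (k:ℝ) := fun y => by rw [hhabs]; exact_mod_cast hk y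
      have hMle : ∀ y, hlMax n h y ≤ (k:ℝ≥0∞) := hlMax_le n h k hhk
      -- L φ equals the set integral of h over Q
      have hL : (SimpleFunc.map ENNReal.ofNNReal φ).lintegral volume
          = ∫⁻ y in Q, ENNReal.ofReal |h y| := by
        rw [← SimpleFunc.lintegral_eq_lintegral, ← lintegral_indicator hQm]
        congr 1
        funext y
        by_cases hy : y ∈ Q
        · simp [Set.indicator_of_mem hy, hhabs y, hh]
        · have := hφ y
          rw [Set.indicator_of_notMem hy, nonpos_iff_eq_zero, ENNReal.coe_eq_zero] at this
          simp [Set.indicator_of_notMem hy, this]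
      set S := ∫⁻ y in Q, ENNReal.ofReal |h y| with hS
      set A := ENNReal.ofReal r ^ (-(n:ℝ)) * S with hA
      have hxQ : x ∈ Q := by
        rw [hQdef, cube]; exact Metric.mem_ball_self (by linarith)
      have hAle : ∀ y ∈ Q, A ≤ hlMax n h y := fun y hy => hlMax_ge n h x r hr y hy
      have hAtop : A ≠ ⊤ := (lt_of_le_of_lt (le_trans (hAle x hxQ) (hMle x)) coe_lt_top).ne
      -- pointwise comparison for n_mono
      have hmono : X.N (A.toReal • χ) ≤ X.N (fun y => (hlMax n h y).toReal) := by
        refine X.n_mono _ _ (Filter.Eventually.of_forall fun y => ?_)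
        by_cases hy : y ∈ Q
        · have h1 : (A.toReal • χ) y = A.toReal := by
            simp [hχ, Set.indicator_of_mem hy]
          rw [h1, abs_of_nonneg ENNReal.toReal_nonneg, abs_of_nonneg ENNReal.toReal_nonneg]
          exact ENNReal.toReal_mono ((hMle y).trans_lt coe_lt_top).ne (hAle y hy)
        · have h1 : (A.toReal • χ) y = 0 := by
            simp [hχ, Set.indicator_of_notMem hy]
          rw [h1]
          simp
      have hchain : A * X.N χ ≤ C := by
        have h2 : X.N (A.toReal • χ) = A * X.N χ := by
          rw [X.n_smul, abs_of_nonneg ENNReal.toReal_nonneg, ENNReal.ofReal_toReal hAtop]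
        calc A * X.N χ = X.N (A.toReal • χ) := h2.symm
          _ ≤ X.N (fun y => (hlMax n h y).toReal) := hmono
          _ ≤ C * X.N h := hCM h
          _ ≤ C * 1 := mul_le_mul_right hNh C
          _ = C := mul_one C
      calc (SimpleFunc.map ENNReal.ofNNReal φ).lintegral volume * X.N χ
          = S * X.N χ := by rw [hL]
        _ = ENNReal.ofReal r ^ (n:ℝ) * (A * X.N χ) := by
            rw [hA]
            rw [show ENNReal.ofReal r ^ (n:ℝ) * (ENNReal.ofReal r ^ (-(n:ℝ)) * S * X.N χ)
              = (ENNReal.ofReal r ^ (-(n:ℝ)) * ENNReal.ofReal r ^ (n:ℝ)) * (S * X.N χ) by ring,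
              rpow_cancel_aux r hr n, one_mul]
        _ ≤ ENNReal.ofReal r ^ (n:ℝ) * C := mul_le_mul_right hchain _
        _ = C * ENNReal.ofReal r ^ (n:ℝ) := mul_comm _ _
    rw [mul_comm, kotheNorm, ENNReal.iSup_mul]
    refine iSup_le fun g => ?_
    rw [ENNReal.iSup_mul]
    exact iSup_le fun hg => key g hg
end
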